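/- Let φ be the action of ℤ on ℚ (additive group) with φ_n(x) = 2^n · x, and equip ℚ with positive cone ℚ_{≥0} and ℤ with positive cone ℕ. Then the smallest submonoid of ℚ ⋊_φ ℤ closed under conjugation containing ℚ_{≥0} × ℕ equals {(x,n) : n ≥ 1} ∪ (ℚ_{≥0} × {0}), which is the lexicographic cone; in particular it strictly contains the product cone ℚ_{≥0} × ℕ, so the corresponding point with the minimal compatible order is strong but not a rali. -/

import Mathlib

namespace PreordGrp

/-- A positive cone on an additive group: a submonoid closed under conjugation.
It induces the preorder `x ≤ y ↔ -x + y ∈ P`. -/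
def IsCone {G : Type*} [AddGroup G] (P : Set G) : Prop :=
  (0 : G) ∈ P ∧ (∀ x ∈ P, ∀ y ∈ P, x + y ∈ P) ∧ ∀ x ∈ P, ∀ a : G, a + x - a ∈ P

/-- `x ≤ y` in the preorder induced by the cone `P`. -/
def coneLe {G : Type*} [AddGroup G] (P : Set G) (x y : G) : Prop := -x + y ∈ P

/-- `x ~ y` : both `x ≤ y` and `y ≤ x` in the preorder induced by `P`. -/
def coneSim {G : Type*} [AddGroup G] (P : Set G) (x y : G) : Prop :=
  coneLe P x y ∧ coneLe P y x

section SDP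

variable {X B : Type*} [AddGroup X] [AddGroup B]

/-- An action of `B` on `X` by group automorphisms:
`φ 0 = id` and `φ (b + b') = φ b ∘ φ b'`. -/
def IsAction (φ : B → X ≃+ X) : Prop :=
  (∀ x : X, φ 0 x = x) ∧ ∀ b b' : B, ∀ x : X, φ (b + b') x = φ b (φ b' x)

/-- Addition in the semidirect product `X ⋊_φ B`:
`(x, b) + (x', b') = (x + φ b x', b + b')`. -/
def sAdd (φ : B → X ≃+ X) (p q : X × B) : X × B := (p.1 + φ p.2 q.1, p.2 + q.2)

/-- Negation in the semidirect product `X ⋊_φ B`. -/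
def sNeg (φ : B → X ≃+ X) (p : X × B) : X × B := (-(φ (-p.2) p.1), -p.2)

/-- A positive cone on `X ⋊_φ B`: contains `0`, closed under addition and
under conjugation `p ↦ g + p - g`. -/
def IsSCone (φ : B → X ≃+ X) (P : Set (X × B)) : Prop :=
  ((0, 0) : X × B) ∈ P ∧ (∀ p ∈ P, ∀ q ∈ P, sAdd φ p q ∈ P) ∧
    ∀ p ∈ P, ∀ g : X × B, sAdd φ (sAdd φ g p) (sNeg φ g) ∈ P

/-- A compatible positive cone `P` on `X ⋊_φ B`:
(a) `(x, b) ∈ P → b ∈ PB`, (b) `(x, 0) ∈ P ↔ x ∈ PX`, (c) `b ∈ PB → (0, b) ∈ P`. -/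
def IsCompatible (φ : B → X ≃+ X) (PX : Set X) (PB : Set B) (P : Set (X × B)) : Prop :=
  IsSCone φ P ∧ (∀ x b, (x, b) ∈ P → b ∈ PB) ∧
    (∀ x : X, (x, (0 : B)) ∈ P ↔ x ∈ PX) ∧ ∀ b ∈ PB, ((0 : X), b) ∈ P

/-- The lexicographic cone: `(x, b)` with `b > 0`, or `b ~ 0` and `x ∈ PX`. -/
def lexCone (PX : Set X) (PB : Set B) : Set (X × B) :=
  {p | (p.2 ∈ PB ∧ -p.2 ∉ PB) ∨ (p.2 ∈ PB ∧ -p.2 ∈ PB ∧ p.1 ∈ PX)}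

/-- The smallest positive cone (conjugation-closed submonoid) of `X ⋊_φ B`
containing the product cone `PX ×ˢ PB`. -/
def genCone (φ : B → X ≃+ X) (PX : Set X) (PB : Set B) : Set (X × B) :=
  ⋂₀ {Q : Set (X × B) | IsSCone φ Q ∧ PX ×ˢ PB ⊆ Q}

end SDP

/-- for the action `φ n x = 2^n * x` of `(ℤ, ℕ)` on `(ℚ, ℚ≥0)`,
the minimal compatible cone on `ℚ ⋊_φ ℤ` is
`{(x, n) | n ≥ 1} ∪ (ℚ≥0 × {0})`, which is the lexicographic cone; in
particular it strictly contains the product cone, so the minimal point is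
strong but not a rali. -/
theorem stmt11 (φ : ℤ → ℚ ≃+ ℚ) (hφ : IsAction φ)
    (hdef : ∀ (n : ℤ) (x : ℚ), φ n x = 2 ^ n * x) :
    genCone φ {x : ℚ | 0 ≤ x} {n : ℤ | 0 ≤ n}
        = {p : ℚ × ℤ | 1 ≤ p.2} ∪ ({x : ℚ | 0 ≤ x} ×ˢ ({0} : Set ℤ)) ∧
    {p : ℚ × ℤ | 1 ≤ p.2} ∪ ({x : ℚ | 0 ≤ x} ×ˢ ({0} : Set ℤ))
        = lexCone {x : ℚ | 0 ≤ x} {n : ℤ | 0 ≤ n} ∧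
    {x : ℚ | 0 ≤ x} ×ˢ {n : ℤ | 0 ≤ n}
        ⊂ genCone φ {x : ℚ | 0 ≤ x} {n : ℤ | 0 ≤ n} := by
  set PX : Set ℚ := {x : ℚ | 0 ≤ x} with hPX
  set PB : Set ℤ := {n : ℤ | 0 ≤ n} with hPB
  set T : Set (ℚ × ℤ) := {p : ℚ × ℤ | 1 ≤ p.2} ∪ (PX ×ˢ ({0} : Set ℤ)) with hTdef
  have hmemT : ∀ p : ℚ × ℤ, p ∈ T ↔ 1 ≤ p.2 ∨ (0 ≤ p.1 ∧ p.2 = 0) := by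
    intro p
    rcases p with ⟨a, b⟩
    simp [hTdef, Set.mem_prod, hPX, Prod.ext_iff]
  -- T is an SCone
  have hT : IsSCone φ T := by
    refine ⟨?_, ?_, ?_⟩
    · rw [hmemT]; right; exact ⟨le_refl 0, rfl⟩
    · intro p hp q hq
      rw [hmemT] at hp hq ⊢
      rcases hp with h1 | ⟨hx1, hb1⟩ <;> rcases hq with h2 | ⟨hx2, hb2⟩
      · left; simp [sAdd]; omega
      · left; simp [sAdd, hb2]; omega
      · left; simp [sAdd, hb1]; omega
      · right; constructor
        · show 0 ≤ p.1 + φ p.2 q.1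
          rw [hdef, hb1]
          positivity
        · simp [sAdd, hb1, hb2]
    · intro p hp g
      rw [hmemT] at hp ⊢
      rcases hp with h1 | ⟨hx, hb⟩
      · left; simp [sAdd, sNeg]; omega
      · right; constructor
        · show 0 ≤ g.1 + φ g.2 p.1 + φ (g.2 + p.2) (-(φ (-g.2) g.1))
          rw [hdef, hdef, hdef, hb]
          have h2 : (2 : ℚ) ^ (g.2 : ℤ) * (2 ^ (-g.2 : ℤ) * g.1) = g.1 := by
            rw [← mul_assoc, ← zpow_add₀ (by norm_num : (2:ℚ) ≠ 0)]
            simp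
          simp only [add_zero, mul_neg, h2]
          have : (0:ℚ) ≤ 2 ^ (g.2 : ℤ) * p.1 := by positivity
          linarith
        · simp [sAdd, sNeg, hb]
  have hsub : PX ×ˢ PB ⊆ T := by
    rintro ⟨x, n⟩ ⟨hx, hn⟩
    rw [hmemT]
    rcases lt_or_eq_of_le (show (0:ℤ) ≤ n by simpa [hPB] using hn) with h | h
    · left; omega
    · right; exact ⟨hx, h.symm⟩
  have hle : genCone φ PX PB ⊆ T := Set.sInter_subset_of_mem ⟨hT, hsub⟩
  have hge : T ⊆ genCone φ PX PB := by
    rintro ⟨x, n⟩ hp Q hQ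
    obtain ⟨⟨h0, hadd, hconj⟩, hprod⟩ := hQ
    rw [hmemT] at hp
    rcases hp with h1 | ⟨hx, hn⟩
    · -- step 1 : (-a, 1) ∈ Q for a ≥ 0
      have step1 : ∀ a : ℚ, 0 ≤ a → ((-a, 1) : ℚ × ℤ) ∈ Q := by
        intro a ha
        have h01 : ((0, 1) : ℚ × ℤ) ∈ Q := hprod ⟨by simp [hPX], by simp [hPB]⟩
        have := hconj _ h01 (a, 0)
        have heq : sAdd φ (sAdd φ ((a, 0) : ℚ × ℤ) (0, 1)) (sNeg φ (a, 0))
            = ((-a, 1) : ℚ × ℤ) := by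
          simp only [sAdd, sNeg, hdef]
          norm_num
          ring
        rwa [heq] at this
      have step2 : ((x, 1) : ℚ × ℤ) ∈ Q := by
        rcases le_total 0 x with hx | hx
        · have h1 : ((x, 0) : ℚ × ℤ) ∈ Q := hprod ⟨hx, by simp [hPB]⟩
          have h2 : ((0, 1) : ℚ × ℤ) ∈ Q := hprod ⟨by simp [hPX], by simp [hPB]⟩
          have := hadd _ h1 _ h2
          have heq : sAdd φ ((x, 0) : ℚ × ℤ) (0, 1) = ((x, 1) : ℚ × ℤ) := by
            simp [sAdd, hdef]
          rwa [heq] at this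
        · have := step1 (-x) (by linarith)
          simpa using this
      have h3 : ((0, n - 1) : ℚ × ℤ) ∈ Q := hprod ⟨by simp [hPX], by simp [hPB]; omega⟩
      have := hadd _ step2 _ h3
      have heq : sAdd φ ((x, 1) : ℚ × ℤ) (0, n - 1) = ((x, n) : ℚ × ℤ) := by
        simp [sAdd, hdef]
      rwa [heq] at this
    · have hn' : n = 0 := hn
      exact hprod ⟨hx, by simp [hPB, hn']⟩
  have h1 : genCone φ PX PB = T := le_antisymm hle hge
  refine ⟨h1, ?_, ?_⟩
  · ext ⟨x, n⟩
    rw [hmemT]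
    simp only [lexCone, Set.mem_setOf_eq, hPB, hPX]
    constructor
    · rintro (h | ⟨hx, hn⟩)
      · left; exact ⟨by omega, by omega⟩
      · right; exact ⟨by omega, by omega, hx⟩
    · rintro (⟨h1, h2⟩ | ⟨h1, h2, h3⟩)
      · left; omega
      · right; exact ⟨h3, by omega⟩
  · constructor
    · intro p hp Q hQ; exact hQ.2 hp
    · intro hcon
      have : ((-1 : ℚ), (1 : ℤ)) ∈ genCone φ PX PB := by
        rw [h1, hmemT]; left; exact le_refl 1
      have := hcon this
      have : (0 : ℚ) ≤ -1 := this.1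
      linarith

end PreordGrp
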